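/- Let k ≥ 1 and m ≥ 2k be integers, and let φ^μ be an irreducible unitary representation of S(m) with m_μ ≠ 0 on (ℂ^d)^{⊗m}. Then the partial trace of its Young projector over the last k tensor factors satisfies tr_{m−k+1,…,m} P_μ = Σ_β m_{μ/β}·(m_μ/m_β)·P_β, the sum running over the isomorphism classes of irreducible representations β of S(m−k) occurring in the restriction of μ to S(m−k) (each of which automatically has m_β ≠ 0), where m_{μ/β} is the multiplicity of β in that restriction (equivalently, the number of paths in the Young branching from μ down to β). -/

import Mathlib

open scoped BigOperators
open scoped Classical
open scoped ComplexOrder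
open Matrix

noncomputable section

/-- Square matrices on the computational basis of `(ℂ^d)^{⊗ n}`. -/
abbrev Mat (d n : ℕ) := Matrix (Fin n → Fin d) (Fin n → Fin d) ℂ

/-- The unitary permuting the tensor factors according to `σ`. -/
def Vperm (d n : ℕ) (σ : Equiv.Perm (Fin n)) : Mat d n :=
  Matrix.of fun f g => if f ∘ σ = g then (1 : ℂ) else 0

/-- Orthogonal projector onto the maximally entangled state of factors `r` and `s`,
tensored with the identity on the remaining factors. -/
def Pplus (d n : ℕ) (r s : Fin n) : Mat d n :=
  Matrix.of fun f g =>
    if f r = f s ∧ g r = g s ∧ ∀ t : Fin n, t ≠ r → t ≠ s → f t = g t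
    then (1 : ℂ) / d else 0

/-- `V^{(k)} = d^k · P⁺_{n-2k+1,n} ⋯ P⁺_{n-k,n-k+1}` on `n = a + 2k` factors
(`a = n - 2k`), tensored with the identity on the remaining factors. -/
def Vk (d a k : ℕ) : Mat d (a + k + k) :=
  ((d : ℂ) ^ k) •
    ((List.finRange k).map fun j : Fin k =>
      Pplus d (a + k + k) ⟨a + (j : ℕ), by have := j.isLt; omega⟩
        ⟨a + k + k - 1 - (j : ℕ), by have := j.isLt; omega⟩).prod

/-- Extension of an operator on the first `m` factors by the identity on the rest. -/
def extOp {d m n : ℕ} (h : m ≤ n) (X : Mat d m) : Mat d n :=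
  Matrix.of fun f g =>
    if ∀ i : Fin n, m ≤ (i : ℕ) → f i = g i
    then X (fun i => f (Fin.castLE h i)) (fun i => g (Fin.castLE h i)) else 0

def splice {d a b : ℕ} (f : Fin a → Fin d) (t : Fin b → Fin d) : Fin (a + b) → Fin d :=
  fun i => if h : (i : ℕ) < a then f ⟨i, h⟩ else t ⟨(i : ℕ) - a, by have := i.isLt; omega⟩

/-- Partial trace over the last `b` tensor factors. -/
def ptraceLast {d : ℕ} (a b : ℕ) (X : Mat d (a + b)) : Mat d a :=
  Matrix.of fun f g => ∑ t : Fin b → Fin d, X (splice f t) (splice g t)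

def finLtEquiv {m n : ℕ} (h : m ≤ n) : Fin m ≃ {i : Fin n // (i : ℕ) < m} where
  toFun i := ⟨⟨(i : ℕ), lt_of_lt_of_le i.isLt h⟩, i.isLt⟩
  invFun j := ⟨(j.1 : ℕ), j.2⟩
  left_inv i := rfl
  right_inv j := rfl

/-- The embedding of `S(m)` into `S(n)`, acting on the first `m` letters. -/
def permExt {m n : ℕ} (h : m ≤ n) (σ : Equiv.Perm (Fin m)) : Equiv.Perm (Fin n) :=
  σ.extendDomain (finLtEquiv h)

/-- A unitary irreducible matrix representation (Schur's criterion). -/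
def IsUnitaryIrrep {G : Type*} [Group G] {e : ℕ}
    (φ : G →* Matrix (Fin e) (Fin e) ℂ) : Prop :=
  (∀ g, (φ g)ᴴ * φ g = 1) ∧
  ∀ X : Matrix (Fin e) (Fin e) ℂ, (∀ g, X * φ g = φ g * X) →
    ∃ c : ℂ, X = c • (1 : Matrix (Fin e) (Fin e) ℂ)

/-- Operator basis `E^μ_{ij} = (d_μ/m!) Σ_τ φ^μ_{ji}(τ⁻¹) V_τ` on the first `m` factors. -/
def Eop (d m : ℕ) {e : ℕ} (φ : Equiv.Perm (Fin m) →* Matrix (Fin e) (Fin e) ℂ)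
    (i j : Fin e) : Mat d m :=
  ((e : ℂ) / (Nat.factorial m : ℂ)) •
    ∑ τ : Equiv.Perm (Fin m), φ τ⁻¹ j i • Vperm d m τ

/-- Young projector `P_μ = Σ_i E^μ_{ii}`. -/
def Pop (d m : ℕ) {e : ℕ} (φ : Equiv.Perm (Fin m) →* Matrix (Fin e) (Fin e) ℂ) : Mat d m :=
  ∑ i : Fin e, Eop d m φ i i

/-- Schur–Weyl multiplicity `m_μ = tr(P_μ)/d_μ` (a real number). -/
def multSW (d m : ℕ) {e : ℕ} (φ : Equiv.Perm (Fin m) →* Matrix (Fin e) (Fin e) ℂ) : ℝ :=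
  (Matrix.trace (Pop d m φ)).re / (e : ℝ)

/-- A family of concrete unitary irreducible matrix representations of `S(a)`. -/
structure IrrepFamily (a : ℕ) where
  Label : Type
  [instFintype : Fintype Label]
  [instDecEq : DecidableEq Label]
  dim : Label → ℕ
  dim_pos : ∀ ℓ, 0 < dim ℓ
  rep : ∀ ℓ, Equiv.Perm (Fin a) →* Matrix (Fin (dim ℓ)) (Fin (dim ℓ)) ℂ
  irrep : ∀ ℓ, IsUnitaryIrrep (rep ℓ)

attribute [instance] IrrepFamily.instFintype IrrepFamily.instDecEq

/-- An irreducible unitary representation of `S(a+k)` in PRIR form relative to the chain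
`S(a+k) ⊃ ⋯ ⊃ S(a)`: the restriction to `S(a)` is block diagonal, the blocks being
indexed by branching paths, the block of every path ending at the irrep `α` of `S(a)`
being one and the same fixed matrix irrep `Φ.rep α`. -/
structure PRIRData (a k : ℕ) (Φ : IrrepFamily a) (e : ℕ) where
  rep : Equiv.Perm (Fin (a + k)) →* Matrix (Fin e) (Fin e) ℂ
  irrep : IsUnitaryIrrep rep
  Path : Type
  [instFintypePath : Fintype Path]
  [instDecEqPath : DecidableEq Path]
  endOf : Path → Φ.Label
  basis : ((r : Path) × Fin (Φ.dim (endOf r))) ≃ Fin e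
  block_diag : ∀ (h : Equiv.Perm (Fin a)) (r : Path) (l l' : Fin (Φ.dim (endOf r))),
      rep (permExt (Nat.le_add_right a k) h) (basis ⟨r, l⟩) (basis ⟨r, l'⟩)
        = Φ.rep (endOf r) h l l'
  block_off : ∀ (h : Equiv.Perm (Fin a)) (r r' : Path), r ≠ r' →
      ∀ (l : Fin (Φ.dim (endOf r))) (l' : Fin (Φ.dim (endOf r'))),
      rep (permExt (Nat.le_add_right a k) h) (basis ⟨r, l⟩) (basis ⟨r', l'⟩) = 0

attribute [instance] PRIRData.instFintypePath PRIRData.instDecEqPath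

/-- The number of paths `m_{μ/α}`, i.e. the multiplicity of `α` in the restriction. -/
def PRIRData.pathMult {a k : ℕ} {Φ : IrrepFamily a} {e : ℕ}
    (P : PRIRData a k Φ e) (α : Φ.Label) : ℕ :=
  Fintype.card {r : P.Path // P.endOf r = α}

/-- The basis operators
`F^{r_{μ/α} r_{ν/α}}_{i_μ j_ν} = (m_α/√(m_μ m_ν)) E^μ_{i_μ,(r,1_α)} V^{(k)} E^ν_{(s,1_α),j_ν}`. -/
def Fop (d a k : ℕ) (Φ : IrrepFamily a) {e e' : ℕ}
    (P : PRIRData a k Φ e) (Q : PRIRData a k Φ e')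
    (r : P.Path) (s : Q.Path) (i : Fin e) (j : Fin e') : Mat d (a + k + k) :=
  ((multSW d a (Φ.rep (P.endOf r)) /
      Real.sqrt (multSW d (a + k) P.rep * multSW d (a + k) Q.rep) : ℝ) : ℂ) •
    (extOp (Nat.le_add_right (a + k) k)
        (Eop d (a + k) P.rep i (P.basis ⟨r, ⟨0, Φ.dim_pos _⟩⟩)) *
      Vk d a k *
      extOp (Nat.le_add_right (a + k) k)
        (Eop d (a + k) Q.rep (Q.basis ⟨s, ⟨0, Φ.dim_pos _⟩⟩) j))

/-- The projectors `F_μ(α) = Σ_{r_{μ/α}} Σ_{k_μ} F^{r r}_{k k}`. -/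
def Fproj (d a k : ℕ) (Φ : IrrepFamily a) {e : ℕ}
    (P : PRIRData a k Φ e) (α : Φ.Label) : Mat d (a + k + k) :=
  ∑ r : {r : P.Path // P.endOf r = α}, ∑ i : Fin e, Fop d a k Φ P P r.1 r.1 i i

/-- Eigenvalues `λ_μ(α) = (k!·C(N,k)/d^N)·(m_μ d_α)/(m_α d_μ)` of the MPBT operator. -/
def lambdaEig (d a k : ℕ) (Φ : IrrepFamily a) {e : ℕ}
    (P : PRIRData a k Φ e) (α : Φ.Label) : ℝ :=
  ((Nat.factorial k * Nat.choose (a + k) k : ℝ) / (d : ℝ) ^ (a + k)) *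
    (multSW d (a + k) P.rep * (Φ.dim α : ℝ)) / (multSW d a (Φ.rep α) * (e : ℝ))

/-- A family of irreps of `S(a+k)` in PRIR form relative to `Φ`, one chosen
representative for each isomorphism class (pairwise non-isomorphic and complete). -/
structure PRIRFamily (a k : ℕ) (Φ : IrrepFamily a) where
  Label : Type
  [instFintype : Fintype Label]
  [instDecEq : DecidableEq Label]
  dim : Label → ℕ
  prir : ∀ ℓ, PRIRData a k Φ (dim ℓ)
  noniso : ∀ ℓ ℓ', ℓ ≠ ℓ' → ∀ T : Matrix (Fin (dim ℓ)) (Fin (dim ℓ')) ℂ,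
      (∀ σ, (prir ℓ).rep σ * T = T * (prir ℓ').rep σ) → T = 0
  complete : ∀ (e : ℕ) (ψ : Equiv.Perm (Fin (a + k)) →* Matrix (Fin e) (Fin e) ℂ),
      IsUnitaryIrrep ψ → ∃ ℓ, ∃ T : Matrix (Fin (dim ℓ)) (Fin e) ℂ,
        ∃ T' : Matrix (Fin e) (Fin (dim ℓ)) ℂ,
          T * T' = 1 ∧ T' * T = 1 ∧ ∀ σ, (prir ℓ).rep σ * T = T * ψ σ

attribute [instance] PRIRFamily.instFintype PRIRFamily.instDecEq

/-- The signal states `σ_i` of the MPBT scheme, for a tuple `v` of (distinct) ports: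
the ports are factors `0,…,a+k-1` and `B̃_j` (resp. `C_j`) is factor `a+k+j`. -/
def sigmaOp (d a k : ℕ) (v : Fin k → Fin (a + k)) : Mat d (a + k + k) :=
  ((1 : ℂ) / (d : ℂ) ^ a) •
    ((List.finRange k).map fun j : Fin k =>
      Pplus d (a + k + k) (Fin.castLE (Nat.le_add_right (a + k) k) (v j))
        ⟨a + k + (j : ℕ), by have := j.isLt; omega⟩).prod

/-- The MPBT operator `ρ = Σ_{i ∈ I} σ_i`. -/
def rhoOp (d a k : ℕ) : Mat d (a + k + k) :=
  ∑ v : {v : Fin k → Fin (a + k) // Function.Injective v}, sigmaOp d a k v.1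

/-- `P⁺_{A_i,C}`, tensored with the identity on the remaining ports. -/
def PplusTuple (d a k : ℕ) (v : Fin k → Fin (a + k)) : Mat d (a + k + k) :=
  ((List.finRange k).map fun j : Fin k =>
    Pplus d (a + k + k) (Fin.castLE (Nat.le_add_right (a + k) k) (v j))
      ⟨a + k + (j : ℕ), by have := j.isLt; omega⟩).prod

/-- The increasing enumeration of the ports not appearing in `v`. -/
def compEnum {a k : ℕ} (v : Fin k → Fin (a + k)) (hv : Function.Injective v) :
    Fin a → Fin (a + k) := fun i =>
  (((Finset.image v Finset.univ)ᶜ.orderIsoOfFin (by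
      rw [Finset.card_compl, Finset.card_image_of_injective _ hv, Finset.card_univ,
        Fintype.card_fin, Fintype.card_fin]
      omega)) i).1

/-- Placement of an operator on the tensor factors enumerated by `w`,
tensored with the identity on the remaining factors. -/
def placeOp {d a n : ℕ} (w : Fin a → Fin n) (X : Mat d a) : Mat d n :=
  Matrix.of fun f g =>
    if ∀ i : Fin n, (∀ j, w j ≠ i) → f i = g i
    then X (fun j => f (w j)) (fun j => g (w j)) else 0

/-- `U^{⊗N} ⊗ Ū^{⊗k}`. -/
def Upow (d N k : ℕ) (U : Matrix (Fin d) (Fin d) ℂ) : Mat d (N + k) :=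
  Matrix.of fun f g =>
    ∏ i : Fin (N + k),
      if (i : ℕ) < N then U (f i) (g i) else (starRingEnd ℂ) (U (f i) (g i))

/-- A family of concrete unitary irreps of a subgroup `H ⊆ S(n)`. -/
structure SubIrrepFamily (n : ℕ) (H : Subgroup (Equiv.Perm (Fin n))) where
  Label : Type
  [instFintype : Fintype Label]
  [instDecEq : DecidableEq Label]
  dim : Label → ℕ
  rep : ∀ ℓ, H →* Matrix (Fin (dim ℓ)) (Fin (dim ℓ)) ℂ
  irrep : ∀ ℓ, IsUnitaryIrrep (rep ℓ)

attribute [instance] SubIrrepFamily.instFintype SubIrrepFamily.instDecEq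

/-- An irrep of `S(n)` whose basis is adapted to the subgroup `H` (PRIR form). -/
structure PRIRSubData (n : ℕ) (H : Subgroup (Equiv.Perm (Fin n)))
    (Ψ : SubIrrepFamily n H) (e : ℕ) where
  rep : Equiv.Perm (Fin n) →* Matrix (Fin e) (Fin e) ℂ
  irrep : IsUnitaryIrrep rep
  Path : Type
  [instFintypePath : Fintype Path]
  [instDecEqPath : DecidableEq Path]
  endOf : Path → Ψ.Label
  basis : ((r : Path) × Fin (Ψ.dim (endOf r))) ≃ Fin e
  block_diag : ∀ (h : H) (r : Path) (l l' : Fin (Ψ.dim (endOf r))),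
      rep (h : Equiv.Perm (Fin n)) (basis ⟨r, l⟩) (basis ⟨r, l'⟩) = Ψ.rep (endOf r) h l l'
  block_off : ∀ (h : H) (r r' : Path), r ≠ r' →
      ∀ (l : Fin (Ψ.dim (endOf r))) (l' : Fin (Ψ.dim (endOf r'))),
      rep (h : Equiv.Perm (Fin n)) (basis ⟨r, l⟩) (basis ⟨r', l'⟩) = 0

attribute [instance] PRIRSubData.instFintypePath PRIRSubData.instDecEqPath

/-- A family of pairwise non-isomorphic irreps of `S(n)` in PRIR form relative to `H`. -/
structure PRIRSubFamily (n : ℕ) (H : Subgroup (Equiv.Perm (Fin n)))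
    (Ψ : SubIrrepFamily n H) where
  Label : Type
  [instFintype : Fintype Label]
  [instDecEq : DecidableEq Label]
  dim : Label → ℕ
  prir : ∀ ℓ, PRIRSubData n H Ψ (dim ℓ)
  noniso : ∀ ℓ ℓ', ℓ ≠ ℓ' → ∀ T : Matrix (Fin (dim ℓ)) (Fin (dim ℓ')) ℂ,
      (∀ σ, (prir ℓ).rep σ * T = T * (prir ℓ').rep σ) → T = 0

attribute [instance] PRIRSubFamily.instFintype PRIRSubFamily.instDecEq

end
noncomputable section Aux

variable {d n : ℕ}

lemma Vperm_mul (σ π : Equiv.Perm (Fin n)) :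
    Vperm d n σ * Vperm d n π = Vperm d n (σ * π) := by
  ext f h
  simp only [Matrix.mul_apply, Vperm, Matrix.of_apply, ite_mul, one_mul, zero_mul,
    Finset.sum_ite_eq, Finset.mem_univ, if_true]
  congr 1

lemma Vperm_conjTranspose (σ : Equiv.Perm (Fin n)) :
    (Vperm d n σ)ᴴ = Vperm d n σ⁻¹ := by
  ext f g
  simp only [Matrix.conjTranspose_apply, Vperm, Matrix.of_apply]
  have h : (g ∘ ⇑σ = f) ↔ (f ∘ ⇑σ⁻¹ = g) := by
    constructor
    · rintro rfl; funext i; simp [Function.comp]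
    · rintro rfl; funext i; simp [Function.comp]
  by_cases hc : g ∘ ⇑σ = f
  · rw [if_pos hc, if_pos (h.mp hc)]; simp
  · rw [if_neg hc, if_neg (fun hx => hc (h.mpr hx))]; simp

/-- trace of `Vperm` is invariant under conjugation. -/
lemma traceV_conj (σ π : Equiv.Perm (Fin n)) :
    Matrix.trace (Vperm d n (σ * π * σ⁻¹)) = Matrix.trace (Vperm d n π) := by
  unfold Matrix.trace Vperm
  simp only [Matrix.diag_apply, Matrix.of_apply]
  apply Fintype.sum_equiv ((σ.symm).arrowCongr (Equiv.refl (Fin d)))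
  intro f
  have he : ∀ h : Fin n → Fin d, ((σ.symm).arrowCongr (Equiv.refl (Fin d))) h = h ∘ ⇑σ := by
    intro h; rfl
  rw [he f]
  congr 1
  rw [eq_iff_iff]
  constructor <;> intro h
  · funext j
    have := congrFun h (σ j)
    simp only [Function.comp, Equiv.Perm.mul_apply, Equiv.Perm.inv_def, Equiv.symm_apply_apply] at this ⊢
    exact this
  · funext i
    have := congrFun h (σ⁻¹ i)
    simp only [Function.comp, Equiv.Perm.mul_apply, Equiv.Perm.inv_def, Equiv.apply_symm_apply] at this ⊢
    exact this

lemma traceV_inv (σ : Equiv.Perm (Fin n)) :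
    Matrix.trace (Vperm d n σ⁻¹) = Matrix.trace (Vperm d n σ) := by
  unfold Matrix.trace Vperm
  simp only [Matrix.diag_apply, Matrix.of_apply]
  apply Finset.sum_congr rfl
  intro f _
  congr 1
  rw [eq_iff_iff]
  constructor <;> intro h
  · funext i
    have := congrFun h (σ i)
    simp only [Function.comp, Equiv.Perm.inv_def, Equiv.symm_apply_apply] at this
    exact this.symm
  · funext i
    have := congrFun h (σ⁻¹ i)
    simp only [Function.comp, Equiv.Perm.inv_def, Equiv.apply_symm_apply] at this
    exact this.symm

lemma traceV_real (σ : Equiv.Perm (Fin n)) :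
    (starRingEnd ℂ) (Matrix.trace (Vperm d n σ)) = Matrix.trace (Vperm d n σ) := by
  unfold Matrix.trace Vperm
  simp only [Matrix.diag_apply, Matrix.of_apply, map_sum]
  apply Finset.sum_congr rfl
  intro f _
  split <;> simp

end Aux
noncomputable section AuxB

variable {d m e : ℕ} (φ : Equiv.Perm (Fin m) →* Matrix (Fin e) (Fin e) ℂ)

lemma unitary_inv (hφ : IsUnitaryIrrep φ) (τ : Equiv.Perm (Fin m)) :
    φ τ⁻¹ = (φ τ)ᴴ := by
  have h1 : φ τ * φ τ⁻¹ = 1 := by rw [← _root_.map_mul]; simp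
  calc φ τ⁻¹ = 1 * φ τ⁻¹ := by rw [one_mul]
    _ = ((φ τ)ᴴ * φ τ) * φ τ⁻¹ := by rw [hφ.1]
    _ = (φ τ)ᴴ * (φ τ * φ τ⁻¹) := by rw [mul_assoc]
    _ = (φ τ)ᴴ := by rw [h1, mul_one]

lemma mul_std_mul (A B : Matrix (Fin e) (Fin e) ℂ) (a b c dd : Fin e) :
    (A * Matrix.single b c (1:ℂ) * B) a dd = A a b * B c dd := by
  rw [Matrix.mul_apply]
  have key : ∀ j, (A * Matrix.single b c (1:ℂ)) a j * B j dd
      = (if j = c then A a b * B c dd else 0) := by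
    intro j
    rw [Matrix.mul_apply]
    by_cases hj : j = c
    · subst hj
      rw [if_pos rfl, Finset.sum_eq_single b]
      · simp [Matrix.single]
      · intro l _ hl
        simp only [Matrix.single, Matrix.of_apply, mul_ite, mul_one, mul_zero,
          ite_eq_right_iff, and_imp]
        exact fun h _ => absurd h.symm hl
      · simp
    · rw [if_neg hj, Finset.sum_eq_zero, zero_mul]
      intro l _
      simp only [Matrix.single, Matrix.of_apply, mul_ite, mul_one, mul_zero,
        ite_eq_right_iff, and_imp]
      exact fun _ h2 => absurd h2.symm hj
  rw [Finset.sum_congr rfl fun j _ => key j]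
  simp

/-- Schur orthogonality, entrywise. -/
lemma schur_orth (hφ : IsUnitaryIrrep φ) (a b c dd : Fin e) :
    (e : ℂ) * (∑ h : Equiv.Perm (Fin m), φ h⁻¹ a b * φ h c dd)
      = (Nat.factorial m : ℂ) * (if b = c then 1 else 0) * (if a = dd then 1 else 0) := by
  set E := Matrix.single b c (1:ℂ) with hE
  set T := ∑ h : Equiv.Perm (Fin m), φ h⁻¹ * E * φ h with hT
  have hcomm : ∀ g, T * φ g = φ g * T := by
    intro g
    have hg1 : φ g * φ g⁻¹ = 1 := by rw [← _root_.map_mul]; simp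
    have h2 : T * φ g = ∑ h : Equiv.Perm (Fin m), (φ h⁻¹ * E * φ h) * φ g :=
      Finset.sum_mul _ _ _
    have h1 : φ g * T = ∑ h : Equiv.Perm (Fin m), φ g * (φ h⁻¹ * E * φ h) :=
      Finset.mul_sum _ _ _
    rw [h1, h2]
    refine Fintype.sum_equiv (Equiv.mulRight g) _ _ fun h => ?_
    simp only [Equiv.coe_mulRight, _root_.mul_inv_rev, _root_.map_mul]
    simp only [mul_assoc]
    rw [← mul_assoc (φ g) (φ g⁻¹), hg1, one_mul]
  obtain ⟨c₀, hc₀⟩ := hφ.2 T hcomm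
  have htr : Matrix.trace T = (Nat.factorial m : ℂ) * (if b = c then 1 else 0) := by
    rw [hT, Matrix.trace_sum]
    have key : ∀ h : Equiv.Perm (Fin m), Matrix.trace (φ h⁻¹ * E * φ h)
        = (if b = c then 1 else 0) := by
      intro h
      rw [Matrix.trace_mul_comm, ← mul_assoc, ← _root_.map_mul]
      rw [mul_inv_cancel, _root_.map_one, one_mul, hE, Matrix.trace]
      simp only [Matrix.diag_apply, Matrix.single, Matrix.of_apply]
      by_cases hbc : b = c
      · subst hbc
        rw [if_pos rfl, Finset.sum_eq_single b]
        · simp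
        · intro l _ hl
          simp only [ite_eq_right_iff, and_imp]
          exact fun h1 _ => absurd h1.symm hl
        · simp
      · rw [if_neg hbc, Finset.sum_eq_zero]
        intro l _
        simp only [ite_eq_right_iff, and_imp]
        rintro rfl rfl
        exact absurd rfl hbc
    rw [Finset.sum_congr rfl fun h _ => key h]
    simp [Finset.card_univ, Fintype.card_perm, mul_comm]
  have htr2 : Matrix.trace T = c₀ * e := by
    rw [hc₀, Matrix.trace_smul, Matrix.trace_one]
    simp [Fintype.card_fin]
  have hentry : T a dd = ∑ h : Equiv.Perm (Fin m), φ h⁻¹ a b * φ h c dd := by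
    rw [hT, Matrix.sum_apply]
    exact Finset.sum_congr rfl fun h _ => mul_std_mul (φ h⁻¹) (φ h) a b c dd
  have h1 : T a dd = c₀ * (if a = dd then 1 else 0) := by
    rw [hc₀]
    simp [Matrix.smul_apply, Matrix.one_apply]
  calc (e : ℂ) * (∑ h : Equiv.Perm (Fin m), φ h⁻¹ a b * φ h c dd)
      = (e : ℂ) * T a dd := by rw [hentry]
    _ = (c₀ * e) * (if a = dd then 1 else 0) := by rw [h1]; ring
    _ = Matrix.trace T * (if a = dd then 1 else 0) := by rw [htr2]
    _ = _ := by rw [htr]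

end AuxB
noncomputable section AuxC

variable {d m e : ℕ} (φ : Equiv.Perm (Fin m) →* Matrix (Fin e) (Fin e) ℂ)

lemma Pop_eq : Pop d m φ
    = ((e : ℂ) / (Nat.factorial m : ℂ)) •
        ∑ τ : Equiv.Perm (Fin m), Matrix.trace (φ τ⁻¹) • Vperm d m τ := by
  unfold Pop Eop
  rw [← Finset.smul_sum]
  congr 1
  rw [Finset.sum_comm]
  refine Finset.sum_congr rfl fun τ _ => ?_
  rw [← Finset.sum_smul]
  congr 1

lemma trace_Pop_eq : Matrix.trace (Pop d m φ)
    = ((e : ℂ) / (Nat.factorial m : ℂ)) *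
        ∑ τ : Equiv.Perm (Fin m), Matrix.trace (φ τ⁻¹) * Matrix.trace (Vperm d m τ) := by
  rw [Pop_eq, Matrix.trace_smul, Matrix.trace_sum, smul_eq_mul]
  congr 1
  exact Finset.sum_congr rfl fun τ _ => by rw [Matrix.trace_smul, smul_eq_mul]

/-- The key pairing lemma: `e · tr(P_φ V_ρ) = tr(P_φ) · χ_φ(ρ)`. -/
lemma pairing (hφ : IsUnitaryIrrep φ) (ρ : Equiv.Perm (Fin m)) :
    (e : ℂ) * Matrix.trace (Pop d m φ * Vperm d m ρ)
      = Matrix.trace (Pop d m φ) * Matrix.trace (φ ρ) := by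
  set M := ∑ π : Equiv.Perm (Fin m), Matrix.trace (Vperm d m π) • φ π⁻¹ with hM
  have hMcomm : ∀ g, M * φ g = φ g * M := by
    intro g
    have h1 : φ g * M = ∑ κ : Equiv.Perm (Fin m),
        Matrix.trace (Vperm d m κ) • φ (g * κ⁻¹) := by
      rw [hM, Finset.mul_sum]
      exact Finset.sum_congr rfl fun κ _ => by
        rw [mul_smul_comm, _root_.map_mul]
    have h2 : M * φ g = ∑ π : Equiv.Perm (Fin m),
        Matrix.trace (Vperm d m π) • φ (π⁻¹ * g) := by
      rw [hM, Finset.sum_mul]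
      exact Finset.sum_congr rfl fun π _ => by
        rw [smul_mul_assoc, _root_.map_mul]
    rw [h1, h2]
    refine Fintype.sum_equiv ((Equiv.mulLeft g⁻¹).trans (Equiv.mulRight g)) _ _ fun π => ?_
    simp only [Equiv.trans_apply, Equiv.coe_mulLeft, Equiv.coe_mulRight]
    have e1 : g * (g⁻¹ * π * g)⁻¹ = π⁻¹ * g := by group
    have e2 : Matrix.trace (Vperm d m (g⁻¹ * π * g)) = Matrix.trace (Vperm d m π) := by
      have h3 := traceV_conj (d := d) g⁻¹ π
      rwa [inv_inv] at h3
    rw [e1, e2]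
  obtain ⟨c₀, hc₀⟩ := hφ.2 M hMcomm
  have htrM : Matrix.trace M
      = ∑ π : Equiv.Perm (Fin m), Matrix.trace (Vperm d m π) * Matrix.trace (φ π⁻¹) := by
    rw [hM, Matrix.trace_sum]
    exact Finset.sum_congr rfl fun π _ => by rw [Matrix.trace_smul, smul_eq_mul]
  have htrM2 : Matrix.trace M = c₀ * e := by
    rw [hc₀, Matrix.trace_smul, Matrix.trace_one]
    simp [Fintype.card_fin]
  have hP : Matrix.trace (Pop d m φ)
      = ((e : ℂ) / (Nat.factorial m : ℂ)) * Matrix.trace M := by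
    rw [trace_Pop_eq, htrM]
    congr 1
    exact Finset.sum_congr rfl fun τ _ => mul_comm _ _
  have hPV : Matrix.trace (Pop d m φ * Vperm d m ρ)
      = ((e : ℂ) / (Nat.factorial m : ℂ)) *
          ∑ τ : Equiv.Perm (Fin m), Matrix.trace (φ τ⁻¹) * Matrix.trace (Vperm d m (τ * ρ)) := by
    rw [Pop_eq, smul_mul_assoc, Finset.sum_mul, Matrix.trace_smul, smul_eq_mul]
    congr 1
    rw [Matrix.trace_sum]
    refine Finset.sum_congr rfl fun τ _ => ?_
    rw [smul_mul_assoc, Vperm_mul, Matrix.trace_smul, smul_eq_mul]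
  have hre : ∑ τ : Equiv.Perm (Fin m), Matrix.trace (φ τ⁻¹) * Matrix.trace (Vperm d m (τ * ρ))
      = Matrix.trace (φ ρ * M) := by
    have hrM : φ ρ * M = ∑ π : Equiv.Perm (Fin m),
        Matrix.trace (Vperm d m π) • (φ ρ * φ π⁻¹) := by
      rw [hM, Finset.mul_sum]
      exact Finset.sum_congr rfl fun π _ => by rw [mul_smul_comm]
    rw [hrM, Matrix.trace_sum]
    refine Fintype.sum_equiv (Equiv.mulRight ρ) _ _ fun τ => ?_
    rw [Matrix.trace_smul, smul_eq_mul, Equiv.coe_mulRight, ← _root_.map_mul]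
    have e1 : ρ * (τ * ρ)⁻¹ = τ⁻¹ := by group
    rw [e1, mul_comm]
  calc (e : ℂ) * Matrix.trace (Pop d m φ * Vperm d m ρ)
      = (e : ℂ) * (((e : ℂ) / (Nat.factorial m : ℂ)) * Matrix.trace (φ ρ * M)) := by
        rw [hPV, hre]
    _ = ((e : ℂ) / (Nat.factorial m : ℂ)) * (c₀ * e) * Matrix.trace (φ ρ) := by
        rw [hc₀, Matrix.mul_smul, Matrix.trace_smul, mul_one, smul_eq_mul]
        ring
    _ = Matrix.trace (Pop d m φ) * Matrix.trace (φ ρ) := by rw [← htrM2, ← hP]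

lemma trace_Pop_real (hφ : IsUnitaryIrrep φ) :
    (starRingEnd ℂ) (Matrix.trace (Pop d m φ)) = Matrix.trace (Pop d m φ) := by
  rw [trace_Pop_eq, RingHom.map_mul]
  have h1 : (starRingEnd ℂ) ((e : ℂ) / (Nat.factorial m : ℂ)) = (e : ℂ) / (Nat.factorial m : ℂ) := by
    rw [map_div₀]
    simp
  rw [h1, map_sum]
  congr 1
  have key : ∀ τ : Equiv.Perm (Fin m),
      (starRingEnd ℂ) (Matrix.trace (φ τ⁻¹) * Matrix.trace (Vperm d m τ))
        = Matrix.trace (φ τ) * Matrix.trace (Vperm d m τ) := by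
    intro τ
    rw [RingHom.map_mul, traceV_real]
    congr 1
    rw [unitary_inv φ hφ τ, Matrix.trace_conjTranspose]
    exact (Complex.conj_conj _)
  rw [Finset.sum_congr rfl fun τ _ => key τ]
  refine Fintype.sum_equiv (Equiv.inv _) _ _ fun τ => ?_
  simp only [Equiv.inv_apply]
  rw [inv_inv, traceV_inv]

lemma Pop_conjTranspose (hφ : IsUnitaryIrrep φ) :
    (Pop d m φ)ᴴ = Pop d m φ := by
  rw [Pop_eq, Matrix.conjTranspose_smul]
  have h1 : star ((e : ℂ) / (Nat.factorial m : ℂ)) = (e : ℂ) / (Nat.factorial m : ℂ) := by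
    rw [Complex.star_def, map_div₀]; simp
  rw [h1]
  congr 1
  rw [Matrix.conjTranspose_sum]
  refine Fintype.sum_equiv (Equiv.inv _) _ _ fun τ => ?_
  simp only [Equiv.inv_apply]
  rw [Matrix.conjTranspose_smul, Vperm_conjTranspose, inv_inv]
  congr 1
  rw [unitary_inv φ hφ, Matrix.trace_conjTranspose]
  exact (Complex.conj_conj _)

lemma Pop_idem (hφ : IsUnitaryIrrep φ) :
    Pop d m φ * Pop d m φ = Pop d m φ := by
  rcases Nat.eq_zero_or_pos e with he | he
  · subst he
    have : Pop d m φ = 0 := by unfold Pop; simp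
    rw [this, mul_zero]
  have heC : (e : ℂ) ≠ 0 := Nat.cast_ne_zero.mpr he.ne'
  have hmC : (Nat.factorial m : ℂ) ≠ 0 := Nat.cast_ne_zero.mpr (Nat.factorial_pos m).ne'
  have hkey : ∀ ρ : Equiv.Perm (Fin m),
      (e : ℂ) * ∑ τ : Equiv.Perm (Fin m), Matrix.trace (φ τ⁻¹) * Matrix.trace (φ ρ⁻¹ * φ τ)
        = (Nat.factorial m : ℂ) * Matrix.trace (φ ρ⁻¹) := by
    intro ρ
    have step1 : ∀ τ : Equiv.Perm (Fin m), Matrix.trace (φ τ⁻¹) * Matrix.trace (φ ρ⁻¹ * φ τ)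
        = ∑ i : Fin e, ∑ j : Fin e, ∑ p : Fin e,
            φ ρ⁻¹ j p * (φ τ⁻¹ i i * φ τ p j) := by
      intro τ
      rw [Matrix.trace, Matrix.trace]
      simp only [Matrix.diag_apply, Matrix.mul_apply]
      rw [Finset.sum_mul]
      refine Finset.sum_congr rfl fun i _ => ?_
      rw [Finset.mul_sum]
      refine Finset.sum_congr rfl fun j _ => ?_
      rw [Finset.mul_sum]
      refine Finset.sum_congr rfl fun p _ => ?_
      ring
    rw [Finset.sum_congr rfl fun τ _ => step1 τ]
    rw [show (∑ τ : Equiv.Perm (Fin m), ∑ i : Fin e, ∑ j : Fin e, ∑ p : Fin e,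
          φ ρ⁻¹ j p * (φ τ⁻¹ i i * φ τ p j))
        = ∑ i : Fin e, ∑ j : Fin e, ∑ p : Fin e, ∑ τ : Equiv.Perm (Fin m),
          φ ρ⁻¹ j p * (φ τ⁻¹ i i * φ τ p j) from by
      rw [Finset.sum_comm]
      refine Finset.sum_congr rfl fun i _ => ?_
      rw [Finset.sum_comm]
      refine Finset.sum_congr rfl fun j _ => ?_
      rw [Finset.sum_comm]]
    rw [Finset.mul_sum]
    have step2 : ∀ i : Fin e, (e : ℂ) * ∑ j : Fin e, ∑ p : Fin e, ∑ τ : Equiv.Perm (Fin m),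
        φ ρ⁻¹ j p * (φ τ⁻¹ i i * φ τ p j)
        = ∑ j : Fin e, ∑ p : Fin e, φ ρ⁻¹ j p *
            ((Nat.factorial m : ℂ) * (if i = p then 1 else 0) * (if i = j then 1 else 0)) := by
      intro i
      rw [Finset.mul_sum]
      refine Finset.sum_congr rfl fun j _ => ?_
      rw [Finset.mul_sum]
      refine Finset.sum_congr rfl fun p _ => ?_
      rw [← schur_orth φ hφ i i p j]
      rw [← Finset.mul_sum]
      ring
    rw [Finset.sum_congr rfl fun i _ => step2 i]
    have step3 : ∀ i : Fin e, (∑ j : Fin e, ∑ p : Fin e, φ ρ⁻¹ j p *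
        ((Nat.factorial m : ℂ) * (if i = p then 1 else 0) * (if i = j then 1 else 0)))
        = (Nat.factorial m : ℂ) * φ ρ⁻¹ i i := by
      intro i
      rw [Finset.sum_eq_single i]
      · rw [Finset.sum_eq_single i]
        · simp [mul_comm]
        · intro p _ hp
          simp [Ne.symm hp]
        · simp
      · intro j _ hj
        rw [Finset.sum_eq_zero]
        intro p _
        simp [Ne.symm hj]
      · simp
    rw [Finset.sum_congr rfl fun i _ => step3 i]
    rw [← Finset.mul_sum, Matrix.trace]
    rfl
  -- now assemble idempotence
  have hS : Pop d m φ * Pop d m φ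
      = (((e : ℂ) / (Nat.factorial m : ℂ)) * ((e : ℂ) / (Nat.factorial m : ℂ))) •
          ∑ ρ : Equiv.Perm (Fin m),
            (∑ τ : Equiv.Perm (Fin m), Matrix.trace (φ τ⁻¹) * Matrix.trace (φ ρ⁻¹ * φ τ)) •
              Vperm d m ρ := by
    rw [Pop_eq]
    rw [Matrix.smul_mul, Matrix.mul_smul, smul_smul]
    congr 1
    rw [Finset.sum_mul]
    have inner : ∀ τ : Equiv.Perm (Fin m),
        (Matrix.trace (φ τ⁻¹) • Vperm d m τ) * (∑ π : Equiv.Perm (Fin m),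
          Matrix.trace (φ π⁻¹) • Vperm d m π)
        = ∑ ρ : Equiv.Perm (Fin m),
            (Matrix.trace (φ τ⁻¹) * Matrix.trace (φ (τ⁻¹ * ρ)⁻¹)) • Vperm d m ρ := by
      intro τ
      rw [Finset.mul_sum]
      refine Fintype.sum_equiv (Equiv.mulLeft τ) _ _ fun π => ?_
      simp only [Equiv.coe_mulLeft]
      rw [Matrix.smul_mul, Matrix.mul_smul, Vperm_mul, smul_smul]
      congr 2
      group
    rw [Finset.sum_congr rfl fun τ _ => inner τ, Finset.sum_comm]
    refine Finset.sum_congr rfl fun ρ _ => ?_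
    rw [← Finset.sum_smul]
    congr 1
    refine Finset.sum_congr rfl fun τ _ => ?_
    congr 1
    rw [show (τ⁻¹ * ρ)⁻¹ = ρ⁻¹ * τ from by group, _root_.map_mul]
  have hval : ∀ ρ : Equiv.Perm (Fin m),
      (∑ τ : Equiv.Perm (Fin m), Matrix.trace (φ τ⁻¹) * Matrix.trace (φ ρ⁻¹ * φ τ))
        = ((Nat.factorial m : ℂ) / (e : ℂ)) * Matrix.trace (φ ρ⁻¹) := by
    intro ρ
    have h := hkey ρ
    have h2 : (∑ τ : Equiv.Perm (Fin m), Matrix.trace (φ τ⁻¹) * Matrix.trace (φ ρ⁻¹ * φ τ))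
        = ((Nat.factorial m : ℂ) * Matrix.trace (φ ρ⁻¹)) / (e : ℂ) := by
      rw [eq_div_iff heC, mul_comm]
      exact h
    rw [h2]
    ring
  rw [hS, Finset.sum_congr rfl fun ρ _ => by rw [hval ρ]]
  rw [Pop_eq]
  have : ∀ ρ : Equiv.Perm (Fin m),
      (((Nat.factorial m : ℂ) / (e : ℂ)) * Matrix.trace (φ ρ⁻¹)) • Vperm d m ρ
        = ((Nat.factorial m : ℂ) / (e : ℂ)) • (Matrix.trace (φ ρ⁻¹) • Vperm d m ρ) := by
    intro ρ; rw [smul_smul]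
  rw [Finset.sum_congr rfl fun ρ _ => this ρ, ← Finset.smul_sum, smul_smul]
  congr 1
  field_simp

end AuxC
noncomputable section AuxD

variable {d a b m n : ℕ}

/-- splice as an equivalence. -/
def spliceEquiv (d a b : ℕ) : ((Fin a → Fin d) × (Fin b → Fin d)) ≃ (Fin (a+b) → Fin d) where
  toFun p := splice p.1 p.2
  invFun F := (fun i => F ⟨(i : ℕ), by omega⟩, fun j => F ⟨a + (j : ℕ), by omega⟩)
  left_inv p := by
    ext i
    · simp only [splice]
      rw [dif_pos i.isLt]
    · simp only [splice]
      rw [dif_neg (by omega)]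
      congr 1
      ext
      simp
  right_inv F := by
    funext i
    simp only [splice]
    by_cases hi : (i : ℕ) < a
    · rw [dif_pos hi]
    · rw [dif_neg hi]
      congr 1
      ext
      simp
      omega

lemma splice_head (f : Fin a → Fin d) (t : Fin b → Fin d) (i : Fin a) :
    splice f t (Fin.castLE (Nat.le_add_right a b) i) = f i := by
  simp only [splice]
  rw [dif_pos (show ((Fin.castLE (Nat.le_add_right a b) i : Fin (a+b)) : ℕ) < a from i.isLt)]
  congr 1

lemma splice_tail (f : Fin a → Fin d) (t : Fin b → Fin d) (i : Fin (a+b)) (hi : a ≤ (i : ℕ)) :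
    splice f t i = t ⟨(i : ℕ) - a, by omega⟩ := by
  simp only [splice]
  rw [dif_neg (by omega)]

lemma ptraceLast_smul (c : ℂ) (X : Mat d (a+b)) :
    ptraceLast a b (c • X) = c • ptraceLast a b X := by
  ext f g
  simp only [ptraceLast, Matrix.of_apply, Matrix.smul_apply, smul_eq_mul, Finset.mul_sum]

lemma ptraceLast_sum {ι : Type*} (s : Finset ι) (F : ι → Mat d (a+b)) :
    ptraceLast a b (∑ i ∈ s, F i) = ∑ i ∈ s, ptraceLast a b (F i) := by
  ext f g
  simp only [ptraceLast, Matrix.of_apply, Matrix.sum_apply]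
  rw [Finset.sum_comm]

lemma permExt_lt {h : m ≤ n} (σ : Equiv.Perm (Fin m)) (i : Fin m) :
    permExt h σ (Fin.castLE h i) = Fin.castLE h (σ i) := by
  unfold permExt
  rw [Equiv.Perm.extendDomain_apply_subtype σ (finLtEquiv h) (i.isLt : ((Fin.castLE h i : Fin n) : ℕ) < m)]
  have : (finLtEquiv h).symm ⟨Fin.castLE h i, i.isLt⟩ = i := by
    simp [finLtEquiv]
  rw [this]
  rfl

lemma permExt_ge {h : m ≤ n} (σ : Equiv.Perm (Fin m)) (i : Fin n) (hi : m ≤ (i : ℕ)) :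
    permExt h σ i = i := by
  unfold permExt
  exact Equiv.Perm.extendDomain_apply_not_subtype σ (finLtEquiv h) (by omega)

lemma extOp_Vperm (g : Equiv.Perm (Fin a)) :
    extOp (Nat.le_add_right a b) (Vperm d a g)
      = Vperm d (a+b) (permExt (Nat.le_add_right a b) g) := by
  ext F G
  simp only [extOp, Vperm, Matrix.of_apply]
  have key : (F ∘ ⇑(permExt (Nat.le_add_right a b) g) = G)
      ↔ ((∀ i : Fin (a+b), a ≤ (i : ℕ) → F i = G i) ∧
          ((fun i => F (Fin.castLE (Nat.le_add_right a b) i)) ∘ ⇑g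
            = fun i => G (Fin.castLE (Nat.le_add_right a b) i)) ) := by
    constructor
    · intro E
      constructor
      · intro i hi
        have := congrFun E i
        rwa [Function.comp_apply, permExt_ge g i hi] at this
      · funext j
        have := congrFun E (Fin.castLE (Nat.le_add_right a b) j)
        rw [Function.comp_apply, permExt_lt g j] at this
        exact this
    · rintro ⟨h1, h2⟩
      funext i
      rw [Function.comp_apply]
      by_cases hi : (i : ℕ) < a
      · have hi' : i = Fin.castLE (Nat.le_add_right a b) ⟨(i : ℕ), hi⟩ := by
          ext; rfl
        rw [hi', permExt_lt g]
        exact congrFun h2 ⟨(i : ℕ), hi⟩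
      · rw [permExt_ge g i (by omega)]
        exact h1 i (by omega)
  by_cases hc : F ∘ ⇑(permExt (Nat.le_add_right a b) g) = G
  · rw [if_pos hc]
    obtain ⟨h1, h2⟩ := key.mp hc
    rw [if_pos h1, if_pos h2]
  · rw [if_neg hc]
    by_cases h1 : ∀ i : Fin (a+b), a ≤ (i : ℕ) → F i = G i
    · rw [if_pos h1, if_neg (fun h2 => hc (key.mpr ⟨h1, h2⟩))]
    · rw [if_neg h1]

/-- trace duality for the partial trace. -/
lemma trace_ptraceLast_mul (X : Mat d (a+b)) (Y : Mat d a) :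
    Matrix.trace (ptraceLast a b X * Y)
      = Matrix.trace (X * extOp (Nat.le_add_right a b) Y) := by
  rw [Matrix.trace, Matrix.trace]
  simp only [Matrix.diag_apply, Matrix.mul_apply, ptraceLast, Matrix.of_apply, extOp]
  -- RHS reindex
  rw [show (∑ F : Fin (a+b) → Fin d, ∑ G : Fin (a+b) → Fin d, X F G *
        (if ∀ i : Fin (a+b), a ≤ (i : ℕ) → G i = F i
          then Y (fun i => G (Fin.castLE (Nat.le_add_right a b) i))
            (fun i => F (Fin.castLE (Nat.le_add_right a b) i)) else 0))
      = ∑ p : (Fin a → Fin d) × (Fin b → Fin d), ∑ q : (Fin a → Fin d) × (Fin b → Fin d),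
          X (splice p.1 p.2) (splice q.1 q.2) *
          (if ∀ i : Fin (a+b), a ≤ (i : ℕ) → splice q.1 q.2 i = splice p.1 p.2 i
            then Y (fun i => splice q.1 q.2 (Fin.castLE (Nat.le_add_right a b) i))
              (fun i => splice p.1 p.2 (Fin.castLE (Nat.le_add_right a b) i)) else 0) from by
    rw [← Equiv.sum_comp (spliceEquiv d a b)]
    refine Finset.sum_congr rfl fun p _ => ?_
    rw [← Equiv.sum_comp (spliceEquiv d a b)]
    rfl]
  rw [Fintype.sum_prod_type]
  refine Finset.sum_congr rfl fun f _ => ?_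
  have hq : ∀ y : Fin b → Fin d,
      (∑ q : (Fin a → Fin d) × (Fin b → Fin d),
        X (splice f y) (splice q.1 q.2) *
          (if ∀ i : Fin (a+b), a ≤ (i : ℕ) → splice q.1 q.2 i = splice f y i
            then Y (fun i => splice q.1 q.2 (Fin.castLE (Nat.le_add_right a b) i))
              (fun i => splice f y (Fin.castLE (Nat.le_add_right a b) i)) else 0))
      = ∑ g : Fin a → Fin d, X (splice f y) (splice g y) * Y g f := by
    intro y
    rw [Fintype.sum_prod_type]
    refine Finset.sum_congr rfl fun g _ => ?_
    rw [Finset.sum_eq_single y]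
    · have hcond : ∀ i : Fin (a+b), a ≤ (i : ℕ) → splice g y i = splice f y i := by
        intro i hi
        rw [splice_tail _ _ i hi, splice_tail _ _ i hi]
      rw [if_pos hcond]
      congr 1
      show Y (fun i => splice g y (Fin.castLE (Nat.le_add_right a b) i))
          (fun i => splice f y (Fin.castLE (Nat.le_add_right a b) i)) = Y g f
      rw [show (fun i => splice g y (Fin.castLE (Nat.le_add_right a b) i)) = g from
            funext fun i => splice_head g y i,
          show (fun i => splice f y (Fin.castLE (Nat.le_add_right a b) i)) = f from
            funext fun i => splice_head f y i]
    · intro s _ hs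
      rw [if_neg, mul_zero]
      intro hcond
      apply hs
      funext j
      have := hcond ⟨a + (j : ℕ), by omega⟩ (by simp)
      rw [splice_tail _ _ _ (by simp), splice_tail _ _ _ (by simp)] at this
      simpa using this
    · simp
  rw [Finset.sum_congr rfl fun y _ => hq y]
  rw [Finset.sum_comm]
  refine Finset.sum_congr rfl fun g _ => ?_
  rw [Finset.sum_mul]

end AuxD
noncomputable section AuxE

variable {d : ℕ}

/-- Restriction of a permutation fixing the last element. -/
def restrictFix {n : ℕ} (τ : Equiv.Perm (Fin (n+1))) (hτ : τ (Fin.last n) = Fin.last n) :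
    Equiv.Perm (Fin n) :=
  Equiv.ofBijective (fun i => (⟨(τ i.castSucc : ℕ), by
      have h1 : τ i.castSucc ≠ Fin.last n := by
        intro h
        have h2 := τ.injective (h.trans hτ.symm)
        have h3 : (i : ℕ) = n := by
          have := congrArg Fin.val h2
          simpa using this
        omega
      have h4 := (τ i.castSucc).isLt
      have h5 : (τ i.castSucc : ℕ) ≠ n := by
        intro h
        exact h1 (Fin.ext (by simpa using h))
      omega⟩ : Fin n))
    (Finite.injective_iff_bijective.mp (by
      intro i j hij
      have h1 : (τ i.castSucc : ℕ) = (τ j.castSucc : ℕ) := by simpa using hij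
      have h2 : τ i.castSucc = τ j.castSucc := Fin.ext h1
      have h3 := τ.injective h2
      exact Fin.castSucc_injective n h3))

lemma restrictFix_spec {n : ℕ} (τ : Equiv.Perm (Fin (n+1))) (hτ : τ (Fin.last n) = Fin.last n)
    (i : Fin n) : Fin.castSucc (restrictFix τ hτ i) = τ i.castSucc := by
  unfold restrictFix
  rw [Equiv.ofBijective_apply]
  exact Fin.ext rfl

lemma splice_castSucc {n : ℕ} (x : Fin n → Fin d) (t : Fin 1 → Fin d) (j : Fin n) :
    splice x t (Fin.castSucc j) = x j := by
  simp only [splice]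
  rw [dif_pos (show ((Fin.castSucc j : Fin (n+1)) : ℕ) < n from j.isLt)]
  congr 1

lemma splice_last {n : ℕ} (x : Fin n → Fin d) (t : Fin 1 → Fin d) :
    splice x t (Fin.last n) = t ⟨0, by omega⟩ := by
  simp only [splice]
  rw [dif_neg (by simp [Fin.last])]
  congr 1
  ext
  simp [Fin.last]

lemma ptraceLast_Vperm_one (n : ℕ) (τ : Equiv.Perm (Fin (n+1))) :
    ∃ (c : ℕ) (σ : Equiv.Perm (Fin n)),
      ptraceLast n 1 (Vperm d (n+1) τ) = (c : ℂ) • Vperm d n σ := by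
  by_cases hτ : τ (Fin.last n) = Fin.last n
  · refine ⟨d, restrictFix τ hτ, ?_⟩
    ext f g
    simp only [ptraceLast, Matrix.of_apply, Vperm, Matrix.smul_apply, smul_eq_mul]
    have key : ∀ t : Fin 1 → Fin d,
        (splice f t ∘ ⇑τ = splice g t) ↔ (f ∘ ⇑(restrictFix τ hτ) = g) := by
      intro t
      constructor
      · intro E
        funext j
        have h1 := congrFun E j.castSucc
        rw [Function.comp_apply, ← restrictFix_spec τ hτ j, splice_castSucc,
          splice_castSucc] at h1
        exact h1
      · intro E
        funext i
        rw [Function.comp_apply]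
        refine Fin.lastCases ?_ (fun j => ?_) i
        · rw [hτ, splice_last, splice_last]
        · rw [← restrictFix_spec τ hτ j, splice_castSucc, splice_castSucc]
          exact congrFun E j
    rw [Finset.sum_congr rfl fun t (_ : t ∈ Finset.univ) => if_congr (key t) rfl rfl]
    rw [Finset.sum_const, Finset.card_univ]
    have hcard : Fintype.card (Fin 1 → Fin d) = d := by
      rw [Fintype.card_fun]
      simp
    rw [hcard, nsmul_eq_mul]
  · -- moving case
    have hu : (τ (Fin.last n) : ℕ) < n := by
      have h4 := (τ (Fin.last n)).isLt
      have h5 : (τ (Fin.last n) : ℕ) ≠ n := by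
        intro h
        exact hτ (Fin.ext (by simpa using h))
      omega
    set u' : Fin n := ⟨(τ (Fin.last n) : ℕ), hu⟩ with hu'
    have hcu : Fin.castSucc u' = τ (Fin.last n) := Fin.ext rfl
    set τ' := (Equiv.swap (Fin.last n) (τ (Fin.last n))) * τ with hτ'def
    have hτ' : τ' (Fin.last n) = Fin.last n := by
      rw [hτ'def, Equiv.Perm.mul_apply, Equiv.swap_apply_right]
    set σ := restrictFix τ' hτ' with hσ
    have hw : (τ⁻¹ (Fin.last n) : ℕ) < n := by
      have h4 := (τ⁻¹ (Fin.last n)).isLt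
      have h5 : (τ⁻¹ (Fin.last n) : ℕ) ≠ n := by
        intro h
        have h6 : τ⁻¹ (Fin.last n) = Fin.last n := Fin.ext (by simpa using h)
        have h7 : τ (Fin.last n) = Fin.last n := by
          conv_lhs => rw [← h6]
          simp
        exact hτ h7
      omega
    set w' : Fin n := ⟨(τ⁻¹ (Fin.last n) : ℕ), hw⟩ with hw'
    have hcw : Fin.castSucc w' = τ⁻¹ (Fin.last n) := Fin.ext rfl
    have hτw : τ (Fin.castSucc w') = Fin.last n := by rw [hcw]; simp
    -- σ at w'
    have hσw : σ w' = u' := by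
      apply Fin.castSucc_injective
      rw [restrictFix_spec τ' hτ' w', hτ'def, Equiv.Perm.mul_apply, hτw,
        Equiv.swap_apply_left, hcu]
    -- σ away from w'
    have hσj : ∀ j : Fin n, j ≠ w' → Fin.castSucc (σ j) = τ (Fin.castSucc j) := by
      intro j hj
      rw [restrictFix_spec τ' hτ' j, hτ'def, Equiv.Perm.mul_apply]
      apply Equiv.swap_apply_of_ne_of_ne
      · intro h
        have := τ.injective (h.trans hτw.symm)
        exact hj (Fin.castSucc_injective n this)
      · intro h
        have h2 := τ.injective h
        have h3 : (j : ℕ) = n := by simpa using congrArg Fin.val h2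
        omega
    refine ⟨1, σ, ?_⟩
    ext f g
    simp only [ptraceLast, Matrix.of_apply, Vperm, Matrix.smul_apply, smul_eq_mul]
    have claim1 : ∀ t : Fin 1 → Fin d, splice f t ∘ ⇑τ = splice g t →
        (t = fun _ => f u') ∧ f ∘ ⇑σ = g := by
      intro t E
      have hlast := congrFun E (Fin.last n)
      rw [Function.comp_apply, splice_last, ← hcu, splice_castSucc] at hlast
      constructor
      · funext x
        rw [Subsingleton.elim x (⟨0, by omega⟩ : Fin 1)]
        exact hlast.symm
      · funext j
        rw [Function.comp_apply]
        by_cases hj : j = w'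
        · subst hj
          have hwe := congrFun E (Fin.castSucc w')
          rw [Function.comp_apply, hτw, splice_last, splice_castSucc] at hwe
          rw [hσw]
          exact hlast.trans hwe
        · have hje := congrFun E (Fin.castSucc j)
          rw [Function.comp_apply, ← hσj j hj, splice_castSucc, splice_castSucc] at hje
          exact hje
    have claim2 : f ∘ ⇑σ = g → splice f (fun _ => f u') ∘ ⇑τ = splice g (fun _ => f u') := by
      intro E
      funext i
      rw [Function.comp_apply]
      refine Fin.lastCases ?_ (fun j => ?_) i
      · rw [splice_last, ← hcu, splice_castSucc]
      · by_cases hj : j = w'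
        · subst hj
          rw [hτw, splice_last, splice_castSucc, ← congrFun E w', Function.comp_apply, hσw]
        · rw [← hσj j hj, splice_castSucc, splice_castSucc]
          exact congrFun E j
    by_cases hfg : f ∘ ⇑σ = g
    · rw [if_pos hfg]
      rw [Finset.sum_eq_single (fun _ : Fin 1 => f u')]
      · rw [if_pos (claim2 hfg)]
        simp
      · intro t _ ht
        rw [if_neg]
        intro hcond
        exact ht (claim1 t hcond).1
      · simp
    · rw [if_neg hfg, Finset.sum_eq_zero]
      · simp
      intro t _
      rw [if_neg]
      intro hcond
      exact hfg (claim1 t hcond).2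

lemma splice_nil {a : ℕ} (f : Fin a → Fin d) (t : Fin 0 → Fin d) :
    splice f t = f := by
  funext i
  simp only [splice]
  rw [dif_pos (show ((i : Fin (a+0)) : ℕ) < a from i.isLt)]
  exact congrArg f (Fin.ext rfl)

lemma ptraceLast_nil {a : ℕ} (X : Mat d (a+0)) : ptraceLast a 0 X = X := by
  ext f g
  simp only [ptraceLast, Matrix.of_apply]
  rw [Fintype.sum_unique]
  rw [splice_nil, splice_nil]

lemma splice_assoc_one {a b : ℕ} (f : Fin a → Fin d) (s : Fin b → Fin d) (u : Fin 1 → Fin d) :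
    (splice (splice f s) u : Fin (a + b + 1) → Fin d) = splice f (splice s u) := by
  funext i
  simp only [splice]
  by_cases h1 : (i : ℕ) < a + b
  · by_cases h2 : (i : ℕ) < a
    · rw [dif_pos h1, dif_pos h2, dif_pos h2]
    · rw [dif_pos h1, dif_neg h2, dif_neg h2, dif_pos (show (i : ℕ) - a < b by omega)]
  · rw [dif_neg h1, dif_neg (show ¬ (i : ℕ) < a by omega),
      dif_neg (show ¬ (i : ℕ) - a < b by omega)]
    congr 1
    ext
    simp
    omega

lemma ptraceLast_succ {a b : ℕ} (X : Mat d (a + (b+1))) :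
    ptraceLast a (b+1) X = ptraceLast a b (ptraceLast (a+b) 1 X) := by
  ext f g
  simp only [ptraceLast, Matrix.of_apply]
  rw [← Equiv.sum_comp (spliceEquiv d b 1) (fun t => X (splice f t) (splice g t))]
  rw [Fintype.sum_prod_type]
  refine Finset.sum_congr rfl fun s _ => Finset.sum_congr rfl fun u _ => ?_
  show X (splice f (splice s u)) (splice g (splice s u)) = _
  rw [← splice_assoc_one f s u, ← splice_assoc_one g s u]

lemma ptraceLast_Vperm (a k : ℕ) (τ : Equiv.Perm (Fin (a + k))) :
    ∃ (c : ℕ) (σ : Equiv.Perm (Fin a)),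
      ptraceLast a k (Vperm d (a+k) τ) = (c : ℂ) • Vperm d a σ := by
  induction k with
  | zero => exact ⟨1, τ, by rw [ptraceLast_nil]; simp⟩
  | succ b ih =>
    obtain ⟨c1, σ1, h1⟩ := ptraceLast_Vperm_one (d := d) (a + b) τ
    obtain ⟨c2, σ2, h2⟩ := ih σ1
    refine ⟨c1 * c2, σ2, ?_⟩
    have h1' : ptraceLast (a+b) 1 (Vperm d (a+(b+1)) τ) = (c1 : ℂ) • Vperm d (a+b) σ1 := h1
    rw [ptraceLast_succ, h1', ptraceLast_smul, h2, smul_smul]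
    push_cast
    rw [mul_comm]

end AuxE
noncomputable section AuxF

variable {d : ℕ}

lemma trace_AAH {ι : Type*} [Fintype ι] [DecidableEq ι] (A : Matrix ι ι ℂ) :
    Matrix.trace (A * Aᴴ) = ((∑ i : ι, ∑ j : ι, Complex.normSq (A i j) : ℝ) : ℂ) := by
  rw [Matrix.trace]
  push_cast
  simp only [Matrix.diag_apply, Matrix.mul_apply, Matrix.conjTranspose_apply]
  refine Finset.sum_congr rfl fun i _ => Finset.sum_congr rfl fun j _ => ?_
  rw [show star (A i j) = (starRingEnd ℂ) (A i j) from congrFun Complex.star_def (A i j)]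
  rw [Complex.mul_conj]

lemma eq_zero_of_trace_AAH {ι : Type*} [Fintype ι] [DecidableEq ι]
    (A : Matrix ι ι ℂ) (h : Matrix.trace (A * Aᴴ) = 0) : A = 0 := by
  rw [trace_AAH] at h
  have h2 : (∑ i : ι, ∑ j : ι, Complex.normSq (A i j)) = 0 := by exact_mod_cast h
  have h3 : ∀ i ∈ Finset.univ (α := ι), (∑ j : ι, Complex.normSq (A i j)) = 0 := by
    rw [← Finset.sum_eq_zero_iff_of_nonneg]
    · exact h2
    · intro i _
      exact Finset.sum_nonneg fun j _ => Complex.normSq_nonneg _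
  ext i j
  have h4 := (Finset.sum_eq_zero_iff_of_nonneg
    (fun j _ => Complex.normSq_nonneg (A i j))).mp (h3 i (Finset.mem_univ i)) j
    (Finset.mem_univ j)
  simpa using Complex.normSq_eq_zero.mp h4

/-- A nonnegative-real-trace lemma for the sum `Σ_h χ_ψ(h⁻¹)·χ_ψ'(h)`. -/
lemma cross_sum_nonneg {a e e' : ℕ}
    (ψ : Equiv.Perm (Fin a) →* Matrix (Fin e) (Fin e) ℂ)
    (ψ' : Equiv.Perm (Fin a) →* Matrix (Fin e') (Fin e') ℂ)
    (hψ : IsUnitaryIrrep ψ) (hψ' : IsUnitaryIrrep ψ') :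
    ∃ x : ℝ, 0 ≤ x ∧
      (∑ h : Equiv.Perm (Fin a), Matrix.trace (ψ h⁻¹) * Matrix.trace (ψ' h)) = (x : ℂ) := by
  classical
  set G := Equiv.Perm (Fin a)
  set ρ : G → Matrix (Fin e' × Fin e) (Fin e' × Fin e) ℂ :=
    fun h => Matrix.kroneckerMap (fun x y => x * y) (ψ' h) ((ψ h).map (starRingEnd ℂ)) with hρ
  have hρmul : ∀ g h : G, ρ g * ρ h = ρ (g * h) := by
    intro g h
    rw [hρ]
    simp only
    rw [← Matrix.mul_kronecker_mul, ← Matrix.map_mul, ← _root_.map_mul, ← _root_.map_mul]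
  have hρH : ∀ h : G, (ρ h)ᴴ = ρ h⁻¹ := by
    intro h
    ext ⟨i1, i2⟩ ⟨j1, j2⟩
    simp only [hρ, Matrix.conjTranspose_apply, Matrix.kroneckerMap_apply, Matrix.map_apply,
      unitary_inv ψ' hψ' h, unitary_inv ψ hψ h, starRingEnd_apply, star_mul', star_star]
  set C := ∑ h : G, ρ h with hC
  have hCsq : C * C = (Fintype.card G : ℂ) • C := by
    rw [hC, Finset.sum_mul_sum]
    rw [show (∑ g : G, ∑ h : G, ρ g * ρ h) = ∑ g : G, ∑ h : G, ρ (g * h) from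
      Finset.sum_congr rfl fun g _ => Finset.sum_congr rfl fun h _ => hρmul g h]
    rw [show (∑ g : G, ∑ h : G, ρ (g * h)) = ∑ g : G, ∑ κ : G, ρ κ from
      Finset.sum_congr rfl fun g _ => Equiv.sum_comp (Equiv.mulLeft g) ρ]
    rw [Finset.sum_const, Finset.card_univ, ← Finset.sum_nsmul]
    rw [Finset.sum_nsmul]
    rw [← Nat.cast_smul_eq_nsmul ℂ]
  have hCH : Cᴴ = C := by
    rw [hC, Matrix.conjTranspose_sum]
    refine Fintype.sum_equiv (Equiv.inv G) _ _ fun h => ?_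
    rw [hρH, Equiv.inv_apply]
  have hcard : (Fintype.card G : ℂ) ≠ 0 := Nat.cast_ne_zero.mpr Fintype.card_ne_zero
  set D := ((Fintype.card G : ℂ))⁻¹ • C with hD
  have hDD : D * Dᴴ = D := by
    rw [hD, Matrix.conjTranspose_smul, hCH]
    rw [Matrix.smul_mul, Matrix.mul_smul, hCsq, smul_smul, smul_smul]
    rw [show star ((Fintype.card G : ℂ))⁻¹ = ((Fintype.card G : ℂ))⁻¹ from by
      rw [show ∀ z : ℂ, star z = (starRingEnd ℂ) z from congrFun Complex.star_def]
      rw [map_inv₀]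
      simp]
    congr 1
    field_simp
  have htrD : ∃ x : ℝ, 0 ≤ x ∧ Matrix.trace D = (x : ℂ) := by
    refine ⟨∑ i, ∑ j, Complex.normSq (D i j), ?_, ?_⟩
    · exact Finset.sum_nonneg fun i _ => Finset.sum_nonneg fun j _ => Complex.normSq_nonneg _
    · rw [← trace_AAH, hDD]
  obtain ⟨x, hx0, hx⟩ := htrD
  refine ⟨Fintype.card G * x, by positivity, ?_⟩
  have hsum : (∑ h : G, Matrix.trace (ψ h⁻¹) * Matrix.trace (ψ' h)) = Matrix.trace C := by
    rw [hC, Matrix.trace_sum]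
    refine Finset.sum_congr rfl fun h _ => ?_
    rw [hρ]
    simp only
    rw [Matrix.trace_kronecker]
    rw [mul_comm]
    congr 1
    rw [unitary_inv ψ hψ h]
    rw [Matrix.trace, Matrix.trace]
    simp only [Matrix.diag_apply, Matrix.conjTranspose_apply, Matrix.map_apply,
      starRingEnd_apply]
  rw [hsum]
  have hCD : C = (Fintype.card G : ℂ) • D := by
    rw [hD, smul_smul]
    field_simp
    rw [one_smul]
  rw [hCD, Matrix.trace_smul, hx, smul_eq_mul]
  push_cast
  ring

/-- Any element of the span of the `Vperm` that pairs to zero with all `Vperm` vanishes. -/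
lemma span_Vperm_eq_zero {n : ℕ} (X : Mat d n)
    (hX : X ∈ Submodule.span ℂ (Set.range (Vperm d n)))
    (h0 : ∀ g : Equiv.Perm (Fin n), Matrix.trace (X * Vperm d n g) = 0) : X = 0 := by
  obtain ⟨c, hc⟩ := (Submodule.mem_span_range_iff_exists_fun ℂ).mp hX
  apply eq_zero_of_trace_AAH
  have hXH : Xᴴ = ∑ σ : Equiv.Perm (Fin n), (starRingEnd ℂ) (c σ) • Vperm d n σ⁻¹ := by
    rw [← hc, Matrix.conjTranspose_sum]
    refine Finset.sum_congr rfl fun σ _ => ?_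
    rw [Matrix.conjTranspose_smul, Vperm_conjTranspose]
    rfl
  rw [hXH, Finset.mul_sum, Matrix.trace_sum]
  rw [Finset.sum_congr rfl fun σ (_ : σ ∈ Finset.univ) => by
    rw [Matrix.mul_smul, Matrix.trace_smul, h0 σ⁻¹, smul_zero]]
  simp

lemma extOp_smul {m n : ℕ} (h : m ≤ n) (c : ℂ) (X : Mat d m) :
    extOp h (c • X) = c • extOp h X := by
  ext f g
  simp only [extOp, Matrix.of_apply, Matrix.smul_apply, smul_eq_mul]
  split
  · rfl
  · rw [mul_zero]

lemma extOp_sum {m n : ℕ} (h : m ≤ n) {ι : Type*} (s : Finset ι) (F : ι → Mat d m) :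
    extOp h (∑ i ∈ s, F i) = ∑ i ∈ s, extOp h (F i) := by
  ext f g
  simp only [extOp, Matrix.of_apply, Matrix.sum_apply]
  split
  · rfl
  · rw [Finset.sum_const_zero]

/-- Block-diagonal character formula. -/
lemma trace_rep_permExt {a k e : ℕ} {Φ : IrrepFamily a} (P : PRIRData a k Φ e)
    (h : Equiv.Perm (Fin a)) :
    Matrix.trace (P.rep (permExt (Nat.le_add_right a k) h))
      = ∑ r : P.Path, Matrix.trace (Φ.rep (P.endOf r) h) := by
  rw [Matrix.trace]
  rw [← Equiv.sum_comp P.basis (fun x => (P.rep (permExt (Nat.le_add_right a k) h)).diag x)]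
  rw [← Finset.univ_sigma_univ, Finset.sum_sigma]
  refine Finset.sum_congr rfl fun r _ => ?_
  rw [Matrix.trace]
  refine Finset.sum_congr rfl fun l _ => ?_
  exact P.block_diag h r l l

lemma sum_path {a k e : ℕ} {Φ : IrrepFamily a} (P : PRIRData a k Φ e) (F : Φ.Label → ℂ) :
    ∑ r : P.Path, F (P.endOf r) = ∑ β : Φ.Label, (P.pathMult β : ℂ) * F β := by
  rw [← Fintype.sum_fiberwise (P.endOf) (fun r => F (P.endOf r))]
  refine Finset.sum_congr rfl fun β _ => ?_
  rw [show (∑ r : {r : P.Path // P.endOf r = β}, F (P.endOf r.1))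
      = ∑ _r : {r : P.Path // P.endOf r = β}, F β from
    Finset.sum_congr rfl fun r _ => by rw [r.2]]
  rw [Finset.sum_const, Finset.card_univ]
  rw [PRIRData.pathMult, nsmul_eq_mul]

lemma trace_Pop_multSW {m e : ℕ} (φ : Equiv.Perm (Fin m) →* Matrix (Fin e) (Fin e) ℂ)
    (hφ : IsUnitaryIrrep φ) :
    Matrix.trace (Pop d m φ) = ((multSW d m φ : ℝ) : ℂ) * (e : ℂ) := by
  have hreal : ((Matrix.trace (Pop d m φ)).re : ℂ) = Matrix.trace (Pop d m φ) :=
    Complex.conj_eq_iff_re.mp (trace_Pop_real φ hφ)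
  rcases Nat.eq_zero_or_pos e with he | he
  · subst he
    have hz : Pop d m φ = 0 := by unfold Pop; simp
    rw [hz]
    simp
  · have heR : ((e : ℝ)) ≠ 0 := Nat.cast_ne_zero.mpr he.ne'
    rw [← hreal]
    unfold multSW
    rw [Complex.ofReal_div]
    rw [div_mul_eq_mul_div]
    rw [show ((e : ℝ) : ℂ) = (e : ℂ) from by push_cast; rfl]
    rw [mul_div_assoc, div_self (Nat.cast_ne_zero.mpr he.ne'), mul_one]

end AuxF
noncomputable section AuxG

lemma multSW_ne_zero_of_path {a k e : ℕ} {Φ : IrrepFamily a} (d : ℕ)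
    (P : PRIRData a k Φ e) (hm : multSW d (a + k) P.rep ≠ 0)
    (β : Φ.Label) (hβ : P.pathMult β ≠ 0) : multSW d a (Φ.rep β) ≠ 0 := by
  classical
  intro h0
  have hβirr := Φ.irrep β
  have htr0 : Matrix.trace (Pop d a (Φ.rep β)) = 0 := by
    rw [trace_Pop_multSW (Φ.rep β) hβirr, h0]
    simp
  have hPz : Pop d a (Φ.rep β) = 0 := by
    apply eq_zero_of_trace_AAH
    rw [Pop_conjTranspose _ hβirr, Pop_idem _ hβirr]
    exact htr0
  have heβ : ((Φ.dim β : ℂ)) ≠ 0 := Nat.cast_ne_zero.mpr (Φ.dim_pos β).ne'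
  have hS : (∑ h : Equiv.Perm (Fin a), Matrix.trace ((Φ.rep β) h⁻¹) • Vperm d a h) = 0 := by
    have h1 := Pop_eq (d := d) (Φ.rep β)
    rw [hPz] at h1
    have hc : ((Φ.dim β : ℂ) / (Nat.factorial a : ℂ)) ≠ 0 :=
      div_ne_zero heβ (Nat.cast_ne_zero.mpr (Nat.factorial_pos a).ne')
    exact (smul_eq_zero.mp h1.symm).resolve_left hc
  have hSext : (∑ h : Equiv.Perm (Fin a), Matrix.trace ((Φ.rep β) h⁻¹) •
      Vperm d (a+k) (permExt (Nat.le_add_right a k) h)) = 0 := by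
    have h1 : extOp (Nat.le_add_right a k) (∑ h : Equiv.Perm (Fin a),
        Matrix.trace ((Φ.rep β) h⁻¹) • Vperm d a h)
        = ∑ h : Equiv.Perm (Fin a), Matrix.trace ((Φ.rep β) h⁻¹) •
            Vperm d (a+k) (permExt (Nat.le_add_right a k) h) := by
      rw [extOp_sum]
      exact Finset.sum_congr rfl fun h _ => by rw [extOp_smul, extOp_Vperm]
    rw [← h1, hS]
    ext f g
    simp only [extOp, Matrix.of_apply, Matrix.zero_apply]
    split <;> rfl
  have hpair : ∑ h : Equiv.Perm (Fin a), Matrix.trace ((Φ.rep β) h⁻¹) *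
      Matrix.trace (Pop d (a+k) P.rep *
        Vperm d (a+k) (permExt (Nat.le_add_right a k) h)) = 0 := by
    have h1 : Pop d (a+k) P.rep * (∑ h : Equiv.Perm (Fin a),
        Matrix.trace ((Φ.rep β) h⁻¹) •
          Vperm d (a+k) (permExt (Nat.le_add_right a k) h)) = 0 := by
      rw [hSext, mul_zero]
    have h2 := congrArg Matrix.trace h1
    rw [Finset.mul_sum, Matrix.trace_sum] at h2
    rw [Finset.sum_congr rfl (fun h (_ : h ∈ Finset.univ) => by
      rw [Matrix.mul_smul, Matrix.trace_smul, smul_eq_mul])] at h2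
    simpa using h2
  have heμ : (e : ℂ) ≠ 0 := by
    intro h
    apply hm
    have he0 : e = 0 := Nat.cast_eq_zero.mp h
    subst he0
    unfold multSW
    simp
  have htrP := trace_Pop_multSW (d := d) P.rep P.irrep
  have htrPne : Matrix.trace (Pop d (a+k) P.rep) ≠ 0 := by
    rw [htrP]
    exact mul_ne_zero (Complex.ofReal_ne_zero.mpr hm) heμ
  -- the weighted character sum vanishes
  have h2 : Matrix.trace (Pop d (a+k) P.rep) *
      (∑ r : P.Path, ∑ h : Equiv.Perm (Fin a),
        Matrix.trace ((Φ.rep β) h⁻¹) * Matrix.trace ((Φ.rep (P.endOf r)) h)) = 0 := by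
    have hA : ∀ h : Equiv.Perm (Fin a),
        Matrix.trace ((Φ.rep β) h⁻¹) * (Matrix.trace (Pop d (a+k) P.rep) *
          Matrix.trace (P.rep (permExt (Nat.le_add_right a k) h)))
        = (e : ℂ) * (Matrix.trace ((Φ.rep β) h⁻¹) *
            Matrix.trace (Pop d (a+k) P.rep *
              Vperm d (a+k) (permExt (Nat.le_add_right a k) h))) := by
      intro h
      rw [← pairing P.rep P.irrep (permExt (Nat.le_add_right a k) h)]
      ring
    calc Matrix.trace (Pop d (a+k) P.rep) *
        (∑ r : P.Path, ∑ h : Equiv.Perm (Fin a),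
          Matrix.trace ((Φ.rep β) h⁻¹) * Matrix.trace ((Φ.rep (P.endOf r)) h))
        = ∑ h : Equiv.Perm (Fin a), Matrix.trace ((Φ.rep β) h⁻¹) *
            (Matrix.trace (Pop d (a+k) P.rep) *
              Matrix.trace (P.rep (permExt (Nat.le_add_right a k) h))) := by
          rw [Finset.sum_comm, Finset.mul_sum]
          refine Finset.sum_congr rfl fun h _ => ?_
          rw [trace_rep_permExt P h]
          rw [Finset.mul_sum, Finset.mul_sum, Finset.mul_sum]
          refine Finset.sum_congr rfl fun r _ => ?_
          ring
      _ = (e : ℂ) * ∑ h : Equiv.Perm (Fin a), Matrix.trace ((Φ.rep β) h⁻¹) *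
            Matrix.trace (Pop d (a+k) P.rep *
              Vperm d (a+k) (permExt (Nat.le_add_right a k) h)) := by
          rw [Finset.mul_sum]
          exact Finset.sum_congr rfl fun h _ => hA h
      _ = 0 := by rw [hpair, mul_zero]
  have h4 : (∑ r : P.Path, ∑ h : Equiv.Perm (Fin a),
      Matrix.trace ((Φ.rep β) h⁻¹) * Matrix.trace ((Φ.rep (P.endOf r)) h)) = 0 :=
    (mul_eq_zero.mp h2).resolve_left htrPne
  -- each summand is a nonnegative real
  have h5 := fun r : P.Path =>
    cross_sum_nonneg (Φ.rep β) (Φ.rep (P.endOf r)) (Φ.irrep β) (Φ.irrep _)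
  choose x hx0 hxQ using h5
  have h6 : (∑ r : P.Path, x r) = 0 := by
    have hcast : ((∑ r : P.Path, x r : ℝ) : ℂ) = 0 := by
      rw [Complex.ofReal_sum]
      rw [Finset.sum_congr rfl fun r (_ : r ∈ Finset.univ) => (hxQ r).symm]
      exact h4
    exact_mod_cast hcast
  have h7 : ∀ r : P.Path, x r = 0 := by
    intro r
    exact (Finset.sum_eq_zero_iff_of_nonneg (fun r _ => hx0 r)).mp h6 r (Finset.mem_univ r)
  -- a path ending at β exists
  obtain ⟨r0, hr0⟩ : ∃ r : P.Path, P.endOf r = β := by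
    unfold PRIRData.pathMult at hβ
    rcases Fintype.card_pos_iff.mp (Nat.pos_of_ne_zero hβ) with ⟨⟨r, hr⟩⟩
    exact ⟨r, hr⟩
  -- but the r0 summand is strictly positive
  have hQ0 : (∑ h : Equiv.Perm (Fin a),
      Matrix.trace ((Φ.rep β) h⁻¹) * Matrix.trace ((Φ.rep β) h)) = ((x r0 : ℝ) : ℂ) := by
    have := hxQ r0
    rw [hr0] at this
    exact this
  have hQval : (∑ h : Equiv.Perm (Fin a),
      Matrix.trace ((Φ.rep β) h⁻¹) * Matrix.trace ((Φ.rep β) h))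
      = ((∑ h : Equiv.Perm (Fin a), Complex.normSq (Matrix.trace ((Φ.rep β) h)) : ℝ) : ℂ) := by
    rw [Complex.ofReal_sum]
    refine Finset.sum_congr rfl fun h _ => ?_
    rw [unitary_inv (Φ.rep β) hβirr h, Matrix.trace_conjTranspose]
    rw [show star (Matrix.trace ((Φ.rep β) h)) = (starRingEnd ℂ) (Matrix.trace ((Φ.rep β) h))
      from starRingEnd_apply _ |>.symm]
    rw [mul_comm, Complex.mul_conj]
  have hxr0 : x r0 = ∑ h : Equiv.Perm (Fin a), Complex.normSq (Matrix.trace ((Φ.rep β) h)) := by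
    have := hQ0.symm.trans hQval
    exact_mod_cast this
  have hpos : 0 < ∑ h : Equiv.Perm (Fin a), Complex.normSq (Matrix.trace ((Φ.rep β) h)) := by
    refine Finset.sum_pos' (fun h _ => Complex.normSq_nonneg _) ⟨1, Finset.mem_univ 1, ?_⟩
    rw [Complex.normSq_pos]
    rw [_root_.map_one, Matrix.trace_one, Fintype.card_fin]
    exact_mod_cast heβ
  rw [h7 r0] at hxr0
  exact absurd hxr0.symm (ne_of_gt hpos)

end AuxG

/-- For `k ≥ 1`, `m = a + k ≥ 2k` and an irrep `φ^μ` of `S(m)` with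
`m_μ ≠ 0`, the partial trace of the Young projector over the last `k` factors is
`tr_{m-k+1,…,m} P_μ = Σ_β m_{μ/β}·(m_μ/m_β)·P_β`, the sum running over the irreps
`β` of `S(m-k)` occurring in the restriction of `μ` (those with no path carry
`m_{μ/β} = 0` and contribute nothing). -/
theorem statement_8 (d a k : ℕ) (hd : 2 ≤ d) (hk : 1 ≤ k) (hka : k ≤ a)
    (Φ : IrrepFamily a) (e : ℕ) (P : PRIRData a k Φ e)
    (hm : multSW d (a + k) P.rep ≠ 0) :
    ptraceLast a k (Pop d (a + k) P.rep)
      = ∑ β : Φ.Label,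
          (((P.pathMult β : ℝ) *
              (multSW d (a + k) P.rep / multSW d a (Φ.rep β)) : ℝ) : ℂ) •
            Pop d a (Φ.rep β) := by
  classical
  have heμ : (e : ℂ) ≠ 0 := by
    intro h
    apply hm
    have he0 : e = 0 := Nat.cast_eq_zero.mp h
    subst he0
    unfold multSW
    simp
  set L := ptraceLast a k (Pop d (a + k) P.rep) with hL
  set R := ∑ β : Φ.Label,
      (((P.pathMult β : ℝ) *
          (multSW d (a + k) P.rep / multSW d a (Φ.rep β)) : ℝ) : ℂ) •
        Pop d a (Φ.rep β) with hR
  -- span memberships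
  have hLspan : L ∈ Submodule.span ℂ (Set.range (Vperm d a)) := by
    rw [hL, Pop_eq, ptraceLast_smul, ptraceLast_sum]
    refine Submodule.smul_mem _ _ (Submodule.sum_mem _ fun τ _ => ?_)
    rw [ptraceLast_smul]
    refine Submodule.smul_mem _ _ ?_
    obtain ⟨c, σ, h⟩ := ptraceLast_Vperm (d := d) a k τ
    rw [h]
    exact Submodule.smul_mem _ _ (Submodule.subset_span ⟨σ, rfl⟩)
  have hRspan : R ∈ Submodule.span ℂ (Set.range (Vperm d a)) := by
    rw [hR]
    refine Submodule.sum_mem _ fun β _ => Submodule.smul_mem _ _ ?_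
    rw [Pop_eq]
    exact Submodule.smul_mem _ _ (Submodule.sum_mem _ fun τ _ =>
      Submodule.smul_mem _ _ (Submodule.subset_span ⟨τ, rfl⟩))
  -- trace identity for L
  have htrL : ∀ g : Equiv.Perm (Fin a), Matrix.trace (L * Vperm d a g)
      = ((multSW d (a + k) P.rep : ℝ) : ℂ) *
          ∑ β : Φ.Label, (P.pathMult β : ℂ) * Matrix.trace (Φ.rep β g) := by
    intro g
    rw [hL, trace_ptraceLast_mul, extOp_Vperm]
    have hp := pairing (d := d) P.rep P.irrep (permExt (Nat.le_add_right a k) g)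
    rw [trace_Pop_multSW P.rep P.irrep] at hp
    have hcancel : Matrix.trace (Pop d (a + k) P.rep *
        Vperm d (a + k) (permExt (Nat.le_add_right a k) g))
        = ((multSW d (a + k) P.rep : ℝ) : ℂ) *
            Matrix.trace (P.rep (permExt (Nat.le_add_right a k) g)) :=
      mul_left_cancel₀ heμ (hp.trans (by ring))
    rw [hcancel, trace_rep_permExt P g, sum_path P (fun β => Matrix.trace (Φ.rep β g))]
  -- trace identity for R
  have htrR : ∀ g : Equiv.Perm (Fin a), Matrix.trace (R * Vperm d a g)
      = ((multSW d (a + k) P.rep : ℝ) : ℂ) *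
          ∑ β : Φ.Label, (P.pathMult β : ℂ) * Matrix.trace (Φ.rep β g) := by
    intro g
    rw [hR, Finset.sum_mul, Matrix.trace_sum, Finset.mul_sum]
    refine Finset.sum_congr rfl fun β _ => ?_
    rw [Matrix.smul_mul, Matrix.trace_smul, smul_eq_mul]
    have heβ : ((Φ.dim β : ℂ)) ≠ 0 := Nat.cast_ne_zero.mpr (Φ.dim_pos β).ne'
    have hp := pairing (d := d) (Φ.rep β) (Φ.irrep β) g
    rw [trace_Pop_multSW (Φ.rep β) (Φ.irrep β)] at hp
    have htrβ : Matrix.trace (Pop d a (Φ.rep β) * Vperm d a g)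
        = ((multSW d a (Φ.rep β) : ℝ) : ℂ) * Matrix.trace (Φ.rep β g) :=
      mul_left_cancel₀ heβ (hp.trans (by ring))
    rw [htrβ]
    by_cases hN : P.pathMult β = 0
    · rw [hN]
      push_cast
      ring
    · have hmβ : multSW d a (Φ.rep β) ≠ 0 := multSW_ne_zero_of_path d P hm β hN
      have hreal : ((P.pathMult β : ℝ) *
          (multSW d (a + k) P.rep / multSW d a (Φ.rep β))) * multSW d a (Φ.rep β)
          = multSW d (a + k) P.rep * (P.pathMult β : ℝ) := by
        field_simp
      calc (((P.pathMult β : ℝ) *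
              (multSW d (a + k) P.rep / multSW d a (Φ.rep β)) : ℝ) : ℂ) *
            (((multSW d a (Φ.rep β) : ℝ) : ℂ) * Matrix.trace (Φ.rep β g))
          = ((((P.pathMult β : ℝ) *
              (multSW d (a + k) P.rep / multSW d a (Φ.rep β))) *
                multSW d a (Φ.rep β) : ℝ) : ℂ) * Matrix.trace (Φ.rep β g) := by
            push_cast
            ring
        _ = ((multSW d (a + k) P.rep * (P.pathMult β : ℝ) : ℝ) : ℂ) *
              Matrix.trace (Φ.rep β g) := by rw [hreal]
        _ = ((multSW d (a + k) P.rep : ℝ) : ℂ) *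
              ((P.pathMult β : ℂ) * Matrix.trace (Φ.rep β g)) := by
            push_cast
            ring
  -- conclude
  have hdiff : L - R = 0 := by
    apply span_Vperm_eq_zero (L - R) (Submodule.sub_mem _ hLspan hRspan)
    intro g
    rw [Matrix.sub_mul, Matrix.trace_sub, htrL g, htrR g, sub_self]
  exact sub_eq_zero.mp hdiff
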